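/- Let (f_n)_{n≥1} be a family of differentiable functions f_n : ℝ → ℝ satisfying: f_n(0) = 1 for all n ≥ 1; f_1(t) = 1 for all t ∈ ℝ; and f_n′(t) = −Σ_{k=1}^{n−1} k · f_k(t) · f_{n−k}(t) for every n ≥ 2 and every t ∈ ℝ. Then for every n ≥ 1 and every t ∈ ℝ, f_n(t) = Σ_{k=0}^{n−1} ((−t)^k / k!) · n^{k−1} · C(n, k+1), where C(n, k+1) is the binomial coefficient. -/

import Mathlib

open scoped Nat

noncomputable section VarrhoAux

open Polynomial Finset

local notation "pc" => PowerSeries.coeff (R := Polynomial ℝ)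

def varrhoP (n : ℕ) : Polynomial ℝ :=
  ∑ k ∈ Finset.range n,
    Polynomial.C ((-1 : ℝ) ^ k / (k ! : ℝ) * (n : ℝ) ^ ((k : ℤ) - 1) * (n.choose (k + 1) : ℝ))
      * Polynomial.X ^ k

def FF : PowerSeries (Polynomial ℝ) := PowerSeries.mk varrhoP

def zD (G : PowerSeries (Polynomial ℝ)) : PowerSeries (Polynomial ℝ) :=
  PowerSeries.mk fun N => (N : ℝ) • PowerSeries.coeff (R := Polynomial ℝ) N G

def dtPS (G : PowerSeries (Polynomial ℝ)) : PowerSeries (Polynomial ℝ) :=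
  PowerSeries.mk fun N => Polynomial.derivative (PowerSeries.coeff (R := Polynomial ℝ) N G)

def EE : PowerSeries (Polynomial ℝ) := dtPS FF + FF * zD FF

lemma coeff_FF (N : ℕ) : pc N FF = varrhoP N := PowerSeries.coeff_mk _ _

lemma coeff_zD (G) (N : ℕ) : pc N (zD G) = (N : ℝ) • pc N G := PowerSeries.coeff_mk _ _

lemma coeff_dtPS (G) (N : ℕ) : pc N (dtPS G) = Polynomial.derivative (pc N G) :=
  PowerSeries.coeff_mk _ _

lemma varrhoP_zero : varrhoP 0 = 0 := by simp [varrhoP]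

lemma constantCoeff_FF : PowerSeries.constantCoeff (R := Polynomial ℝ) FF = 0 := by
  rw [← PowerSeries.coeff_zero_eq_constantCoeff_apply, coeff_FF, varrhoP_zero]

lemma dtPS_mul (G H : PowerSeries (Polynomial ℝ)) :
    dtPS (G * H) = dtPS G * H + G * dtPS H := by
  refine PowerSeries.ext fun N => ?_
  rw [map_add, PowerSeries.coeff_mul, PowerSeries.coeff_mul, coeff_dtPS, PowerSeries.coeff_mul]
  rw [map_sum, ← Finset.sum_add_distrib]
  refine Finset.sum_congr rfl fun p _ => ?_
  rw [derivative_mul, coeff_dtPS, coeff_dtPS]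

lemma zD_mul (G H : PowerSeries (Polynomial ℝ)) :
    zD (G * H) = zD G * H + G * zD H := by
  refine PowerSeries.ext fun N => ?_
  rw [map_add, PowerSeries.coeff_mul, PowerSeries.coeff_mul, coeff_zD, PowerSeries.coeff_mul]
  rw [Finset.smul_sum, ← Finset.sum_add_distrib]
  refine Finset.sum_congr rfl fun p hp => ?_
  rw [Finset.HasAntidiagonal.mem_antidiagonal] at hp
  rw [coeff_zD, coeff_zD, smul_mul_assoc, mul_smul_comm, ← add_smul]
  rw [← hp]
  push_cast
  ring_nf

lemma dtPS_pow (G : PowerSeries (Polynomial ℝ)) (m : ℕ) :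
    dtPS (G ^ (m + 1)) = ((m + 1 : ℕ) : PowerSeries (Polynomial ℝ)) * G ^ m * dtPS G := by
  induction m with
  | zero => simp [pow_one]
  | succ m ih =>
      rw [pow_succ, dtPS_mul, ih]
      push_cast
      ring

lemma zD_pow (G : PowerSeries (Polynomial ℝ)) (m : ℕ) :
    zD (G ^ (m + 1)) = ((m + 1 : ℕ) : PowerSeries (Polynomial ℝ)) * G ^ m * zD G := by
  induction m with
  | zero => simp [pow_one]
  | succ m ih =>
      rw [pow_succ, zD_mul, ih]
      push_cast
      ring


lemma coeff_varrhoP (n k : ℕ) :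
    (varrhoP n).coeff k
      = (-1:ℝ)^k / (k ! : ℝ) * (n:ℝ)^((k:ℤ)-1) * (n.choose (k+1) : ℝ) := by
  classical
  rw [varrhoP, Polynomial.finset_sum_coeff]
  simp only [Polynomial.coeff_C_mul, Polynomial.coeff_X_pow]
  rcases lt_or_ge k n with h | h
  · rw [Finset.sum_eq_single k (fun i _ hik => by simp [Ne.symm hik])
      (fun hk => absurd (Finset.mem_range.mpr h) hk)]
    simp
  · have h0 : (n.choose (k+1) : ℝ) = 0 := by
      rw [Nat.choose_eq_zero_of_lt (by omega)]; simp
    rw [h0, mul_zero]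
    refine Finset.sum_eq_zero fun i hi => ?_
    rw [Finset.mem_range] at hi
    simp only [mul_ite, mul_one, mul_zero]
    rw [if_neg (by omega : ¬ (k = i))]

lemma eval_zero_varrhoP {n : ℕ} (hn : 1 ≤ n) : (varrhoP n).eval 0 = 1 := by
  have hn0 : (n:ℝ) ≠ 0 := Nat.cast_ne_zero.mpr (by omega)
  rw [← Polynomial.coeff_zero_eq_eval_zero, coeff_varrhoP]
  have h1 : ((0:ℕ):ℤ) - 1 = -1 := rfl
  rw [h1, zpow_neg, zpow_one, Nat.choose_one_right]
  simp
  field_simp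

lemma coeff_zero_FF_pow {m : ℕ} (hm : 1 ≤ m) : pc 0 (FF ^ m) = 0 := by
  rw [PowerSeries.coeff_zero_eq_constantCoeff_apply, map_pow, constantCoeff_FF,
    zero_pow (by omega)]

lemma coeff_pow_mul_EE {n m : ℕ} (hm : 1 ≤ m) (IH : ∀ k, k < n → pc k EE = 0) :
    pc n (FF ^ m * EE) = 0 := by
  rw [PowerSeries.coeff_mul]
  refine Finset.sum_eq_zero fun p hp => ?_
  rw [Finset.HasAntidiagonal.mem_antidiagonal] at hp
  rcases Nat.eq_zero_or_pos p.1 with h1 | h1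
  · rw [h1, coeff_zero_FF_pow hm, zero_mul]
  · rw [IH p.2 (by omega), mul_zero]

lemma sum_Icc_choose_pred (q N : ℕ) :
    ∑ i ∈ Finset.Icc 1 N, (i - 1).choose q = N.choose (q + 1) := by
  induction N with
  | zero => simp
  | succ N ih =>
      rw [Finset.sum_Icc_succ_top (by omega), ih, Nat.succ_sub_one,
        Nat.choose_succ_succ' N q]
      omega

lemma eval_zero_coeff_FF_pow (p : ℕ) : ∀ N : ℕ, 1 ≤ N →
    (pc N (FF ^ (p + 1))).eval 0 = ((N - 1).choose p : ℝ) := by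
  induction p with
  | zero =>
      intro N hN
      rw [pow_one, coeff_FF, eval_zero_varrhoP hN, Nat.choose_zero_right, Nat.cast_one]
  | succ p ih =>
      intro N hN
      rw [pow_succ, PowerSeries.coeff_mul, Polynomial.eval_finset_sum,
        Finset.Nat.sum_antidiagonal_eq_sum_range_succ_mk]
      have hterm : ∀ i ∈ Finset.range (N + 1),
          ((pc (i, N - i).1 (FF ^ (p+1)) * pc (i, N - i).2 FF).eval 0)
          = if i ∈ Finset.Icc 1 (N-1) then ((i - 1).choose p : ℝ) else 0 := by
        intro i hi
        rw [Finset.mem_range] at hi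
        rw [Polynomial.eval_mul, coeff_FF]
        by_cases h1 : i = 0
        · rw [if_neg (by simp [h1])]
          subst h1
          rw [coeff_zero_FF_pow (by omega), Polynomial.eval_zero, zero_mul]
        · by_cases h2 : i = N
          · rw [if_neg (by simp [Finset.mem_Icc]; omega)]
            subst h2
            rw [Nat.sub_self, varrhoP_zero, Polynomial.eval_zero, mul_zero]
          · rw [if_pos (by rw [Finset.mem_Icc]; omega),
              ih i (by omega), eval_zero_varrhoP (by omega : 1 ≤ N - i), mul_one]
      rw [Finset.sum_congr rfl hterm, Finset.sum_ite_mem,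
        Finset.inter_eq_right.mpr (by intro x hx; rw [Finset.mem_Icc] at hx; rw [Finset.mem_range]; omega)]
      rw [← Nat.cast_sum, sum_Icc_choose_pred]


lemma coeff_EE_step {n : ℕ} (hn : 1 ≤ n) (IH : ∀ k, k < n → pc k EE = 0) :
    pc n EE = 0 := by
  have hn0 : (n:ℝ) ≠ 0 := Nat.cast_ne_zero.mpr (by omega)
  have hdt : dtPS FF = EE - FF * zD FF := by rw [EE]; ring
  have coeff_nat_mul : ∀ (m : ℕ) (G : PowerSeries (Polynomial ℝ)),
      pc n (((m : ℕ) : PowerSeries (Polynomial ℝ)) * G) = (m : ℕ) • pc n G := by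
    intro m G
    rw [← nsmul_eq_mul, map_nsmul]
  -- the key derivative computation
  have Dlem : ∀ p : ℕ, Polynomial.derivative (pc n (FF ^ (p+2)))
      = (-((p:ℝ)+2) * (n:ℝ) / ((p:ℝ)+3)) • pc n (FF ^ (p+3)) := by
    intro p
    have h1 : Polynomial.derivative (pc n (FF ^ (p+2))) = pc n (dtPS (FF ^ (p+2))) :=
      (coeff_dtPS _ n).symm
    have h2 : dtPS (FF ^ (p + 2)) = ((p+2 : ℕ) : PowerSeries (Polynomial ℝ)) *
        (FF ^ (p+1) * EE - FF ^ (p+2) * zD FF) := by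
      have hp := dtPS_pow FF (p+1)
      rw [hdt] at hp
      rw [hp]; ring
    have h3 : ((p+3 : ℕ) : PowerSeries (Polynomial ℝ)) * (FF ^ (p+2) * zD FF)
        = zD (FF ^ (p+3)) := by
      have hp := zD_pow FF (p+2)
      rw [hp]; ring
    have h4 : ((p:ℝ)+3) • pc n (FF ^ (p+2) * zD FF) = (n:ℝ) • pc n (FF ^ (p+3)) := by
      have := congrArg (pc n) h3
      rw [coeff_nat_mul, coeff_zD] at this
      rw [← this, ← Nat.cast_smul_eq_nsmul ℝ]
      push_cast
      ring_nf
    have h5 : pc n (FF ^ (p+2) * zD FF)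
        = (((p:ℝ)+3)⁻¹ * (n:ℝ)) • pc n (FF ^ (p+3)) := by
      have h30 : ((p:ℝ)+3) ≠ 0 := by positivity
      rw [mul_smul, ← h4, inv_smul_smul₀ h30]
    rw [h1, h2, coeff_nat_mul, map_sub, coeff_pow_mul_EE (by omega) IH, zero_sub, h5,
      ← Nat.cast_smul_eq_nsmul ℝ, smul_neg, smul_smul]
    have h30 : ((p:ℝ)+3) ≠ 0 := by positivity
    rw [← neg_smul]
    congr 1
    push_cast
    field_simp
  -- the hierarchy
  set c : ℕ → ℝ := fun m => (-(n:ℝ))^m / ((m:ℝ)+1) with hc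
  set T : ℕ → Polynomial ℝ :=
    fun m => Polynomial.derivative^[m] (varrhoP n) - c m • pc n (FF ^ (m+1)) with hT
  have claim1 : ∀ m : ℕ, 1 ≤ m → Polynomial.derivative (T m) = T (m+1) := by
    intro m hm
    obtain ⟨p, rfl⟩ : ∃ p, m = p + 1 := ⟨m - 1, by omega⟩
    rw [hT]
    simp only
    rw [map_sub, Polynomial.derivative_smul, ← Function.iterate_succ_apply' Polynomial.derivative]
    congr 1
    rw [Dlem p, smul_smul]
    congr 1
    rw [hc]
    simp only
    have h2 : ((p:ℝ)+1+1) ≠ 0 := by positivity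
    have h3 : ((p:ℝ)+1+1+1) ≠ 0 := by positivity
    push_cast
    field_simp
    ring
  have claim3 : ∀ m : ℕ, Polynomial.derivative^[m] (T 1) = T (m+1) := by
    intro m
    induction m with
    | zero => rfl
    | succ m ih => rw [Function.iterate_succ_apply', ih, claim1 (m+1) (by omega)]
  have hz : ∀ k : ℕ, (n:ℝ)^((k:ℤ)-1) * (n:ℝ) = (n:ℝ)^k := by
    intro k
    calc (n:ℝ)^((k:ℤ)-1) * (n:ℝ) = (n:ℝ)^((k:ℤ)-1) * (n:ℝ)^(1:ℤ) := by rw [zpow_one]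
      _ = (n:ℝ)^((k:ℤ)-1+1) := (zpow_add₀ hn0 _ _).symm
      _ = (n:ℝ)^(k:ℤ) := by norm_num
      _ = (n:ℝ)^k := zpow_natCast _ k
  have hnc : ∀ m:ℕ, ((m:ℝ)+1) * (n.choose (m+1) : ℝ) = (n:ℝ) * (((n-1).choose m : ℕ) : ℝ) := by
    intro m
    have h := Nat.add_one_mul_choose_eq (n-1) m
    rw [(by omega : n - 1 + 1 = n)] at h
    have h' := congrArg (fun x : ℕ => (x : ℝ)) h
    push_cast at h'
    linarith
  have claim2 : ∀ m : ℕ, (T (m+1)).eval 0 = 0 := by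
    intro m
    rw [hT]
    simp only
    rw [Polynomial.eval_sub, Polynomial.eval_smul,
      ← Polynomial.coeff_zero_eq_eval_zero (Polynomial.derivative^[m+1] (varrhoP n)),
      Polynomial.coeff_iterate_derivative, zero_add, Nat.descFactorial_self,
      coeff_varrhoP, eval_zero_coeff_FF_pow (m+1) n hn, nsmul_eq_mul, hc]
    simp only [smul_eq_mul]
    have hK1 : (n.choose (m+1+1) : ℝ) = (n:ℝ) * (((n-1).choose (m+1) : ℕ) : ℝ) / ((m:ℝ)+2) := by
      have := hnc (m+1)
      push_cast at this ⊢
      field_simp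
      linarith
    have hf : ((m+1)! : ℝ) ≠ 0 := Nat.cast_ne_zero.mpr (Nat.factorial_ne_zero _)
    rw [hK1]
    push_cast
    field_simp
    rw [add_sub_cancel_right, zpow_natCast]
    ring
  have hT1 : T 1 = 0 := by
    apply Polynomial.ext
    intro m
    rw [Polynomial.coeff_zero]
    have h := claim2 m
    rw [← claim3 m, ← Polynomial.coeff_zero_eq_eval_zero,
      Polynomial.coeff_iterate_derivative, zero_add, Nat.descFactorial_self,
      nsmul_eq_mul] at h
    have hf : (m ! : ℝ) ≠ 0 := Nat.cast_ne_zero.mpr (Nat.factorial_ne_zero _)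
    exact (mul_eq_zero.mp h).resolve_left hf
  have hDrho : Polynomial.derivative (varrhoP n) = c 1 • pc n (FF ^ 2) := by
    have := hT1
    rw [hT] at this
    simp only at this
    rw [sub_eq_zero] at this
    simpa using this
  have h2x : pc n (FF * zD FF) + pc n (FF * zD FF) = (n:ℝ) • pc n (FF ^ 2) := by
    have hz2 : zD (FF^2) = zD FF * FF + FF * zD FF := by rw [pow_two, zD_mul]
    have hcomm : pc n (zD FF * FF) = pc n (FF * zD FF) := by rw [mul_comm]
    have := coeff_zD (FF ^ 2) n
    rw [hz2, map_add, hcomm] at this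
    linear_combination (norm := module) this
  have hx : pc n (FF * zD FF) = ((n:ℝ)/2) • pc n (FF ^ 2) := by
    have h := h2x
    have : (2:ℝ) • pc n (FF * zD FF) = (n:ℝ) • pc n (FF ^ 2) := by
      rw [two_smul]; exact h
    calc pc n (FF * zD FF) = (2:ℝ)⁻¹ • ((2:ℝ) • pc n (FF * zD FF)) := by
          rw [inv_smul_smul₀ two_ne_zero]
      _ = ((n:ℝ)/2) • pc n (FF ^ 2) := by rw [this, smul_smul]; congr 1; ring
  have : pc n EE = Polynomial.derivative (varrhoP n) + pc n (FF * zD FF) := by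
    rw [EE, map_add, coeff_dtPS, coeff_FF]
  rw [this, hDrho, hx, hc]
  simp only
  rw [← add_smul]
  convert zero_smul ℝ _
  push_cast
  ring

lemma coeff_EE_zero : ∀ n : ℕ, pc n EE = 0 := by
  intro n
  induction n using Nat.strong_induction_on with
  | _ n IH =>
    rcases Nat.eq_zero_or_pos n with rfl | hn
    · have h : pc 0 EE = Polynomial.derivative (varrhoP 0) + pc 0 (FF * zD FF) := by
        rw [EE, map_add, coeff_dtPS, coeff_FF]
      rw [h, varrhoP_zero, map_zero, zero_add,
        PowerSeries.coeff_zero_eq_constantCoeff_apply, map_mul, constantCoeff_FF, zero_mul]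
    · exact coeff_EE_step hn IH

lemma derivative_varrhoP (n : ℕ) (hn : 1 ≤ n) :
    Polynomial.derivative (varrhoP n)
      = - ∑ j ∈ Finset.Icc 1 (n-1), (j:ℝ) • (varrhoP j * varrhoP (n - j)) := by
  have h0 := coeff_EE_zero n
  have h1 : pc n EE = Polynomial.derivative (varrhoP n) + pc n (FF * zD FF) := by
    rw [EE, map_add, coeff_dtPS, coeff_FF]
  have h2 : pc n (FF * zD FF)
      = ∑ j ∈ Finset.Icc 1 (n-1), (j:ℝ) • (varrhoP j * varrhoP (n - j)) := by
    rw [mul_comm, PowerSeries.coeff_mul, Finset.Nat.sum_antidiagonal_eq_sum_range_succ_mk]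
    have hterm : ∀ i ∈ Finset.range (n+1),
        pc (i, n - i).1 (zD FF) * pc (i, n - i).2 FF
          = (i:ℝ) • (varrhoP i * varrhoP (n-i)) := by
      intro i _
      rw [coeff_zD, coeff_FF, coeff_FF, smul_mul_assoc]
    rw [Finset.sum_congr rfl hterm]
    refine (Finset.sum_subset (fun x hx => ?_) (fun x hx hnx => ?_)).symm
    · rw [Finset.mem_Icc] at hx
      rw [Finset.mem_range]
      omega
    · rw [Finset.mem_range] at hx
      rw [Finset.mem_Icc] at hnx
      rcases Nat.eq_zero_or_pos x with rfl | hx1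
      · rw [Nat.cast_zero, zero_smul]
      · have : x = n := by omega
        rw [this, Nat.sub_self, varrhoP_zero, mul_zero, smul_zero]
  rw [h1, h2] at h0
  exact eq_neg_of_add_eq_zero_left h0

lemma deriv_varrho_eval (n : ℕ) (hn : 1 ≤ n) (t : ℝ) :
    deriv (fun s => (varrhoP n).eval s) t
      = -∑ j ∈ Finset.Icc 1 (n-1), (j:ℝ) * (varrhoP j).eval t * (varrhoP (n-j)).eval t := by
  rw [Polynomial.deriv, derivative_varrhoP n hn, Polynomial.eval_neg, Polynomial.eval_finset_sum]
  congr 1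
  refine Finset.sum_congr rfl fun j _ => ?_
  rw [Polynomial.eval_smul, Polynomial.eval_mul, smul_eq_mul]
  ring

lemma eval_varrhoP (n : ℕ) (t : ℝ) :
    (varrhoP n).eval t = ∑ k ∈ Finset.range n,
      ((-t) ^ k / (k ! : ℝ)) * (n : ℝ) ^ ((k : ℤ) - 1) * (n.choose (k + 1) : ℝ) := by
  rw [varrhoP, Polynomial.eval_finset_sum]
  refine Finset.sum_congr rfl fun k _ => ?_
  rw [Polynomial.eval_mul, Polynomial.eval_C, Polynomial.eval_pow, Polynomial.eval_X]
  have : (-t)^k = (-1:ℝ)^k * t^k := by rw [neg_pow]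
  rw [this]
  ring

end VarrhoAux

/-- Uniqueness for the coupled ODE system of Lemma 4.1: any family of differentiable
functions `f_n` with `f_n(0) = 1`, `f_1 ≡ 1`, and `f_n′(t) = −Σ_{k=1}^{n−1} k f_k(t) f_{n−k}(t)`
for `n ≥ 2`, must equal `ϱ_n(t) = Σ_{k=0}^{n−1} ((−t)^k/k!) n^{k−1} C(n,k+1)`. -/
theorem varrho_ode_unique (f : ℕ → ℝ → ℝ)
    (hdiff : ∀ n : ℕ, 1 ≤ n → Differentiable ℝ (f n))
    (h0 : ∀ n : ℕ, 1 ≤ n → f n 0 = 1)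
    (h1 : ∀ t : ℝ, f 1 t = 1)
    (hode : ∀ n : ℕ, 2 ≤ n → ∀ t : ℝ,
      deriv (f n) t = -(∑ k ∈ Finset.Icc 1 (n - 1), (k : ℝ) * f k t * f (n - k) t)) :
    ∀ n : ℕ, 1 ≤ n → ∀ t : ℝ,
      f n t = ∑ k ∈ Finset.range n,
        ((-t) ^ k / (k ! : ℝ)) * (n : ℝ) ^ ((k : ℤ) - 1) * (n.choose (k + 1) : ℝ) := by
  have key : ∀ n : ℕ, 1 ≤ n → ∀ t : ℝ, f n t = (varrhoP n).eval t := by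
    intro n
    induction n using Nat.strong_induction_on with
    | _ n IH =>
      intro hn t
      rcases eq_or_lt_of_le hn with h1' | h2'
      · obtain rfl : n = 1 := h1'.symm
        rw [h1 t]
        have hv : varrhoP 1 = Polynomial.C 1 := by
          rw [varrhoP]
          norm_num
        rw [hv, Polynomial.eval_C]
      · have hn2 : 2 ≤ n := h2'
        have hg' : ∀ s, deriv (fun y => f n y - (varrhoP n).eval y) s = 0 := by
          intro s
          rw [deriv_fun_sub (hdiff n hn s) ((varrhoP n).differentiableAt)]
          rw [hode n hn2 s, deriv_varrho_eval n hn s]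
          have hterm : ∀ j ∈ Finset.Icc 1 (n-1), (j:ℝ) * f j s * f (n-j) s
              = (j:ℝ) * (varrhoP j).eval s * (varrhoP (n-j)).eval s := by
            intro j hj
            rw [Finset.mem_Icc] at hj
            rw [IH j (by omega) (by omega) s, IH (n-j) (by omega) (by omega) s]
          rw [Finset.sum_congr rfl hterm]
          ring
        have hconst := is_const_of_deriv_eq_zero
          ((hdiff n hn).sub (Polynomial.differentiable _)) hg' t 0
        simp only [Pi.sub_apply] at hconst
        rw [h0 n hn, eval_zero_varrhoP hn] at hconst
        linarith [hconst]
  intro n hn t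
  rw [key n hn t, eval_varrhoP]
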